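/- Let B_1,…,B_n be p×m complex matrices with F_0(z) = ∑_{j=1}^n z^{-j} B_j satisfying F_0(z)* F_0(z) = I_m for all z on the unit circle, and suppose n = ρκ for integers ρ, κ ≥ 1. For i = 1,…,κ let 𝐁_i be the ρp×m matrix obtained by stacking B_{(i−1)ρ+1}, B_{(i−1)ρ+2}, …, B_{iρ} vertically (the a-th p×m block of 𝐁_i is B_{(i−1)ρ+a}). Then G(z) = ∑_{i=1}^{κ} z^{-i} 𝐁_i satisfies G(z)* G(z) = I_m for all z on the unit circle. -/

import Mathlib

open Matrix Finset


noncomputable def zr (ρ : ℕ) : ℂ := Complex.exp (2 * Real.pi * Complex.I / ρ)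

lemma zr_norm (ρ : ℕ) : ‖zr ρ‖ = 1 := by
  unfold zr
  have : (2 * Real.pi * Complex.I / ρ) = ((2 * Real.pi / ρ : ℝ) : ℂ) * Complex.I := by
    push_cast; ring
  rw [this, Complex.norm_exp_ofReal_mul_I]

lemma zr_pow (ρ : ℕ) (hρ : 1 ≤ ρ) : (zr ρ) ^ ρ = 1 := by
  unfold zr
  rw [← Complex.exp_nat_mul]
  have hρ0 : (ρ : ℂ) ≠ 0 := by exact_mod_cast Nat.one_le_iff_ne_zero.mp hρ
  have : (ρ : ℂ) * (2 * Real.pi * Complex.I / ρ) = 2 * Real.pi * Complex.I := by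
    field_simp
  rw [this, Complex.exp_two_pi_mul_I]

lemma zr_zpow_eq_one_iff (ρ : ℕ) (hρ : 1 ≤ ρ) (d : ℤ) :
    (zr ρ) ^ d = 1 ↔ (ρ : ℤ) ∣ d := by
  unfold zr
  rw [← Complex.exp_int_mul, Complex.exp_eq_one_iff]
  have hρ0 : (ρ : ℂ) ≠ 0 := by exact_mod_cast Nat.one_le_iff_ne_zero.mp hρ
  have hπ : (2 * Real.pi * Complex.I) ≠ 0 := by
    simp [Real.pi_ne_zero, Complex.I_ne_zero, two_ne_zero]
  constructor
  · rintro ⟨k, hk⟩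
    refine ⟨k, ?_⟩
    have h2 : (d : ℂ) * (2 * Real.pi * Complex.I) =
        ((ρ : ℂ) * k) * (2 * Real.pi * Complex.I) := by
      field_simp at hk
      linear_combination (2 * Real.pi * Complex.I) * hk
    have h3 : (d : ℂ) = (ρ : ℂ) * k := mul_right_cancel₀ hπ h2
    exact_mod_cast h3
  · rintro ⟨k, hk⟩
    refine ⟨k, ?_⟩
    subst hk
    push_cast
    field_simp

lemma zr_geom (ρ : ℕ) (hρ : 1 ≤ ρ) (d : ℤ) :
    ∑ k ∈ Finset.range ρ, ((zr ρ) ^ d) ^ k =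
      if (ρ : ℤ) ∣ d then (ρ : ℂ) else 0 := by
  split_ifs with h
  · rw [(zr_zpow_eq_one_iff ρ hρ d).mpr h]
    simp
  · have hne : (zr ρ) ^ d ≠ 1 := fun hc => h ((zr_zpow_eq_one_iff ρ hρ d).mp hc)
    rw [geom_sum_eq hne]
    have : ((zr ρ) ^ d) ^ ρ = 1 := by
      rw [← zpow_natCast ((zr ρ)^d), ← _root_.zpow_mul, mul_comm, _root_.zpow_mul, zpow_natCast,
        zr_pow ρ hρ, _root_.one_zpow]
    rw [this]
    simp


lemma exists_root_on_circle (ρ : ℕ) (hρ : 1 ≤ ρ) (z : ℂ) (hz : ‖z‖ = 1) :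
    ∃ w : ℂ, ‖w‖ = 1 ∧ w ^ ρ = z := by
  refine ⟨Complex.exp ((z.arg / ρ : ℝ) * Complex.I), ?_, ?_⟩
  · rw [Complex.norm_exp_ofReal_mul_I]
  · rw [← Complex.exp_nat_mul]
    have hρ0 : (ρ : ℝ) ≠ 0 := by exact_mod_cast Nat.one_le_iff_ne_zero.mp hρ
    have : (ρ : ℂ) * ((z.arg / ρ : ℝ) * Complex.I) = (z.arg : ℝ) * Complex.I := by
      have hc : (ρ : ℂ) ≠ 0 := by exact_mod_cast hρ0
      push_cast
      field_simp
    rw [this]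
    have := Complex.norm_mul_exp_arg_mul_I z
    rw [hz] at this
    simpa using this

lemma expand_prod {α : Type*} [Fintype α] {m : ℕ} (N : ℕ)
    (f : ℕ → Matrix α (Fin m) ℂ) (w : ℂ) (hw : ‖w‖ = 1) :
    (∑ j ∈ Finset.range N, w ^ (-(j + 1 : ℤ)) • f j)ᴴ *
      (∑ j ∈ Finset.range N, w ^ (-(j + 1 : ℤ)) • f j) =
    ∑ j ∈ Finset.range N, ∑ j' ∈ Finset.range N,
      w ^ ((j : ℤ) - (j' : ℤ)) • ((f j)ᴴ * f j') := by
  have hw0 : w ≠ 0 := by intro h; rw [h] at hw; simp at hw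
  have hstar : star w = w⁻¹ := by
    have h1 : w * star w = 1 := by
      rw [Complex.star_def, Complex.mul_conj]
      rw [Complex.normSq_eq_norm_sq, hw]
      norm_num
    field_simp [← h1]
    linear_combination h1
  rw [conjTranspose_sum, Matrix.sum_mul]
  refine Finset.sum_congr rfl fun j hj => ?_
  rw [Matrix.mul_sum]
  refine Finset.sum_congr rfl fun j' hj' => ?_
  rw [conjTranspose_smul, Matrix.smul_mul, Matrix.mul_smul, smul_smul]
  congr 1
  rw [Complex.star_def, ← Complex.star_def, star_zpow₀, hstar, _root_.inv_zpow, ← _root_.zpow_neg,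
    neg_neg, ← zpow_add₀ hw0]
  congr 1
  push_cast
  ring


lemma stack_mul {p m ρ : ℕ} (B : ℕ → Matrix (Fin p) (Fin m) ℂ) (i i' : ℕ) :
    (Matrix.of (fun (q : Fin ρ × Fin p) (y : Fin m) => B (ρ * i + q.1.val + 1) q.2 y))ᴴ *
      (Matrix.of (fun (q : Fin ρ × Fin p) (y : Fin m) => B (ρ * i' + q.1.val + 1) q.2 y)) =
    ∑ a ∈ Finset.range ρ, (B (ρ * i + a + 1))ᴴ * B (ρ * i' + a + 1) := by
  ext x y
  simp only [Matrix.mul_apply, Matrix.conjTranspose_apply, Matrix.of_apply,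
    Matrix.sum_apply, Fintype.sum_prod_type]
  rw [← Fin.sum_univ_eq_sum_range]

lemma mod_eq_of_dvd_sub {ρ j j' : ℕ} (h : (ρ : ℤ) ∣ ((j : ℤ) - (j' : ℤ))) :
    j % ρ = j' % ρ := by
  have h2 : (j : ℤ) % ρ = (j' : ℤ) % ρ :=
    Int.emod_eq_emod_iff_emod_sub_eq_zero.mpr (Int.emod_eq_zero_of_dvd h)
  exact_mod_cast h2

lemma reindex_div {n ρ κ : ℕ} (hρ : 1 ≤ ρ) (hn : n = ρ * κ) {α : Type*}
    [AddCommMonoid α] (D : ℕ → ℕ → α) (c : ℤ → α → α) :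
    ∑ j ∈ Finset.range n, ∑ j' ∈ Finset.range n,
      (if (ρ : ℤ) ∣ ((j : ℤ) - (j' : ℤ)) then c ((j : ℤ) - (j' : ℤ)) (D j j') else 0) =
    ∑ i ∈ Finset.range κ, ∑ i' ∈ Finset.range κ, ∑ a ∈ Finset.range ρ,
      c ((ρ : ℤ) * ((i : ℤ) - (i' : ℤ))) (D (ρ * i + a) (ρ * i' + a)) := by
  have hρ0 : ρ ≠ 0 := Nat.one_le_iff_ne_zero.mp hρ
  rw [← Finset.sum_product']
  simp_rw [← Finset.sum_product']
  rw [← Finset.sum_filter]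
  refine Finset.sum_nbij' (fun jp => (jp.1 / ρ, (jp.2 / ρ, jp.1 % ρ)))
    (fun x => (ρ * x.1 + x.2.2, ρ * x.2.1 + x.2.2)) ?_ ?_ ?_ ?_ ?_
  · rintro ⟨j, j'⟩ hj
    simp only [Finset.mem_filter, Finset.mem_product, Finset.mem_range] at hj ⊢
    obtain ⟨⟨hj1, hj2⟩, _⟩ := hj
    refine ⟨?_, ?_, Nat.mod_lt _ (by omega)⟩ <;>
      · rw [Nat.div_lt_iff_lt_mul (by omega), mul_comm]; omega
  · rintro ⟨i, i', a⟩ hx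
    simp only [Finset.mem_filter, Finset.mem_product, Finset.mem_range] at hx ⊢
    obtain ⟨hi, hi', ha⟩ := hx
    have b1 : ρ * i + a < n := by
      calc ρ * i + a < ρ * (i + 1) := by rw [Nat.mul_succ]; omega
        _ ≤ ρ * κ := Nat.mul_le_mul_left _ (by omega)
        _ = n := hn.symm
    have b2 : ρ * i' + a < n := by
      calc ρ * i' + a < ρ * (i' + 1) := by rw [Nat.mul_succ]; omega
        _ ≤ ρ * κ := Nat.mul_le_mul_left _ (by omega)
        _ = n := hn.symm
    exact ⟨⟨b1, b2⟩, ⟨(i : ℤ) - i', by push_cast; ring⟩⟩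
  · rintro ⟨j, j'⟩ hj
    simp only [Finset.mem_filter, Finset.mem_product, Finset.mem_range] at hj
    obtain ⟨⟨hj1, hj2⟩, hd⟩ := hj
    have hmod := mod_eq_of_dvd_sub (ρ := ρ) (j := j) (j' := j') hd
    dsimp only
    simp only [Prod.mk.injEq]
    exact ⟨Nat.div_add_mod j ρ, by rw [hmod]; exact Nat.div_add_mod j' ρ⟩
  · rintro ⟨i, i', a⟩ hx
    simp only [Finset.mem_filter, Finset.mem_product, Finset.mem_range] at hx
    obtain ⟨hi, hi', ha⟩ := hx
    dsimp only
    simp only [Prod.mk.injEq]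
    refine ⟨?_, ?_, ?_⟩
    · rw [Nat.mul_add_div (by omega), Nat.div_eq_of_lt ha]; omega
    · rw [Nat.mul_add_div (by omega), Nat.div_eq_of_lt ha]; omega
    · rw [Nat.mul_add_mod, Nat.mod_eq_of_lt ha]
  · rintro ⟨j, j'⟩ hj
    simp only [Finset.mem_filter, Finset.mem_product, Finset.mem_range] at hj
    obtain ⟨⟨hj1, hj2⟩, hd⟩ := hj
    have hmod := mod_eq_of_dvd_sub (ρ := ρ) (j := j) (j' := j') hd
    dsimp only
    have e1 : ρ * (j / ρ) + j % ρ = j := Nat.div_add_mod j ρ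
    have e2 : ρ * (j' / ρ) + j % ρ = j' := by rw [hmod]; exact Nat.div_add_mod j' ρ
    rw [e1, e2]
    congr 1
    have e1' : (j : ℤ) = (ρ : ℤ) * ((j / ρ : ℕ) : ℤ) + ((j % ρ : ℕ) : ℤ) := by
      exact_mod_cast e1.symm
    have e2' : (j' : ℤ) = (ρ : ℤ) * ((j' / ρ : ℕ) : ℤ) + ((j % ρ : ℕ) : ℤ) := by
      exact_mod_cast e2.symm
    linear_combination e1' - e2'

/-- if `F₀(z) = ∑_{j=1}^n z^{-j} B_j` is isometric on the unit
circle and `n = ρκ`, then the `ρp × m`-valued FIR `G(z) = ∑_{i=1}^κ z^{-i} 𝐁_i`,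
where `𝐁_i` stacks `B_{(i-1)ρ+1}, …, B_{iρ}` vertically, is isometric on the unit
circle. -/
theorem fir_isometry_stacked
    (p m n ρ κ : ℕ) (hρ : 1 ≤ ρ) (hκ : 1 ≤ κ) (hn : n = ρ * κ)
    (B : ℕ → Matrix (Fin p) (Fin m) ℂ)
    (hiso : ∀ z : ℂ, ‖z‖ = 1 →
      (∑ j ∈ Finset.range n, z ^ (-(j + 1 : ℤ)) • B (j + 1))ᴴ *
        (∑ j ∈ Finset.range n, z ^ (-(j + 1 : ℤ)) • B (j + 1)) = 1) :
    ∀ z : ℂ, ‖z‖ = 1 →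
      (∑ i ∈ Finset.range κ, z ^ (-(i + 1 : ℤ)) •
          Matrix.of (fun (q : Fin ρ × Fin p) (y : Fin m) =>
            B (ρ * i + q.1.val + 1) q.2 y))ᴴ *
        (∑ i ∈ Finset.range κ, z ^ (-(i + 1 : ℤ)) •
          Matrix.of (fun (q : Fin ρ × Fin p) (y : Fin m) =>
            B (ρ * i + q.1.val + 1) q.2 y)) = 1 := by
  intro z hz
  obtain ⟨w, hw, hwz⟩ := exists_root_on_circle ρ hρ z hz
  have hw0 : w ≠ 0 := fun h => by rw [h] at hw; simp at hw
  set ζ := zr ρ with hζ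
  have hζn : ‖ζ‖ = 1 := zr_norm ρ
  have hρc : (ρ : ℂ) ≠ 0 := by
    exact_mod_cast Nat.one_le_iff_ne_zero.mp hρ
  set D : ℕ → ℕ → Matrix (Fin m) (Fin m) ℂ :=
    fun j j' => (B (j + 1))ᴴ * B (j' + 1) with hD
  -- Step 1: each rotated evaluation is 1
  have h1 : ∀ k, ∑ j ∈ Finset.range n, ∑ j' ∈ Finset.range n,
      (ζ ^ k * w) ^ ((j : ℤ) - (j' : ℤ)) • D j j' = 1 := by
    intro k
    have hnorm : ‖ζ ^ k * w‖ = 1 := by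
      rw [norm_mul, norm_pow, hζn, hw]; simp
    have h := hiso (ζ ^ k * w) hnorm
    rwa [expand_prod n (fun j => B (j + 1)) _ hnorm] at h
  -- Step 2: scalar sum computation
  have hsc : ∀ d : ℤ, ∑ k ∈ Finset.range ρ, (ζ ^ k * w) ^ d =
      (if (ρ : ℤ) ∣ d then (ρ : ℂ) else 0) * w ^ d := by
    intro d
    rw [← zr_geom ρ hρ d, Finset.sum_mul]
    refine Finset.sum_congr rfl fun k _ => ?_
    rw [mul_zpow]
    congr 1
    rw [← zpow_natCast ζ k, ← _root_.zpow_mul, mul_comm, _root_.zpow_mul, zpow_natCast]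
  -- Step 3: sum the identity over k
  have h2 : ∑ j ∈ Finset.range n, ∑ j' ∈ Finset.range n,
      (∑ k ∈ Finset.range ρ, (ζ ^ k * w) ^ ((j : ℤ) - (j' : ℤ))) • D j j'
      = (ρ : ℂ) • (1 : Matrix (Fin m) (Fin m) ℂ) := by
    calc ∑ j ∈ Finset.range n, ∑ j' ∈ Finset.range n,
        (∑ k ∈ Finset.range ρ, (ζ ^ k * w) ^ ((j : ℤ) - (j' : ℤ))) • D j j'
        = ∑ j ∈ Finset.range n, ∑ j' ∈ Finset.range n, ∑ k ∈ Finset.range ρ,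
            (ζ ^ k * w) ^ ((j : ℤ) - (j' : ℤ)) • D j j' := by
          simp_rw [Finset.sum_smul]
      _ = ∑ k ∈ Finset.range ρ, ∑ j ∈ Finset.range n, ∑ j' ∈ Finset.range n,
            (ζ ^ k * w) ^ ((j : ℤ) - (j' : ℤ)) • D j j' := by
          rw [show (∑ j ∈ Finset.range n, ∑ j' ∈ Finset.range n, ∑ k ∈ Finset.range ρ,
              (ζ ^ k * w) ^ ((j : ℤ) - (j' : ℤ)) • D j j')
            = ∑ j ∈ Finset.range n, ∑ k ∈ Finset.range ρ, ∑ j' ∈ Finset.range n,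
              (ζ ^ k * w) ^ ((j : ℤ) - (j' : ℤ)) • D j j' from
            Finset.sum_congr rfl fun j _ => Finset.sum_comm]
          exact Finset.sum_comm
      _ = ∑ k ∈ Finset.range ρ, (1 : Matrix (Fin m) (Fin m) ℂ) := by
          exact Finset.sum_congr rfl fun k _ => h1 k
      _ = (ρ : ℂ) • 1 := by
          rw [Finset.sum_const, Finset.card_range, Nat.cast_smul_eq_nsmul]
  -- Step 4: rewrite the LHS of h2 via the divisibility filter and reindex
  have h3 : ∑ j ∈ Finset.range n, ∑ j' ∈ Finset.range n,
      (∑ k ∈ Finset.range ρ, (ζ ^ k * w) ^ ((j : ℤ) - (j' : ℤ))) • D j j'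
      = ∑ i ∈ Finset.range κ, ∑ i' ∈ Finset.range κ, ∑ a ∈ Finset.range ρ,
          ((ρ : ℂ) * z ^ ((i : ℤ) - (i' : ℤ))) • D (ρ * i + a) (ρ * i' + a) := by
    have step : ∀ j j' : ℕ,
        (∑ k ∈ Finset.range ρ, (ζ ^ k * w) ^ ((j : ℤ) - (j' : ℤ))) • D j j'
        = if (ρ : ℤ) ∣ ((j : ℤ) - (j' : ℤ)) then
            ((ρ : ℂ) * w ^ ((j : ℤ) - (j' : ℤ))) • D j j' else 0 := by
      intro j j'
      rw [hsc]
      split_ifs with h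
      · rfl
      · simp
    calc ∑ j ∈ Finset.range n, ∑ j' ∈ Finset.range n,
        (∑ k ∈ Finset.range ρ, (ζ ^ k * w) ^ ((j : ℤ) - (j' : ℤ))) • D j j'
        = ∑ j ∈ Finset.range n, ∑ j' ∈ Finset.range n,
            (if (ρ : ℤ) ∣ ((j : ℤ) - (j' : ℤ)) then
              ((ρ : ℂ) * w ^ ((j : ℤ) - (j' : ℤ))) • D j j' else 0) := by
          exact Finset.sum_congr rfl fun j _ => Finset.sum_congr rfl fun j' _ => step j j'
      _ = ∑ i ∈ Finset.range κ, ∑ i' ∈ Finset.range κ, ∑ a ∈ Finset.range ρ,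
            ((ρ : ℂ) * w ^ ((ρ : ℤ) * ((i : ℤ) - (i' : ℤ)))) • D (ρ * i + a) (ρ * i' + a) :=
          reindex_div hρ hn D (fun d M => ((ρ : ℂ) * w ^ d) • M)
      _ = ∑ i ∈ Finset.range κ, ∑ i' ∈ Finset.range κ, ∑ a ∈ Finset.range ρ,
            ((ρ : ℂ) * z ^ ((i : ℤ) - (i' : ℤ))) • D (ρ * i + a) (ρ * i' + a) := by
          refine Finset.sum_congr rfl fun i _ => Finset.sum_congr rfl fun i' _ =>
            Finset.sum_congr rfl fun a _ => ?_
          congr 2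
          rw [_root_.zpow_mul, zpow_natCast, hwz]
  -- Step 5: expand the G product
  have h4 : (∑ i ∈ Finset.range κ, z ^ (-(i + 1 : ℤ)) •
          Matrix.of (fun (q : Fin ρ × Fin p) (y : Fin m) =>
            B (ρ * i + q.1.val + 1) q.2 y))ᴴ *
        (∑ i ∈ Finset.range κ, z ^ (-(i + 1 : ℤ)) •
          Matrix.of (fun (q : Fin ρ × Fin p) (y : Fin m) =>
            B (ρ * i + q.1.val + 1) q.2 y))
      = ∑ i ∈ Finset.range κ, ∑ i' ∈ Finset.range κ,
          z ^ ((i : ℤ) - (i' : ℤ)) • ∑ a ∈ Finset.range ρ, D (ρ * i + a) (ρ * i' + a) := by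
    rw [expand_prod κ (fun i => Matrix.of (fun (q : Fin ρ × Fin p) (y : Fin m) =>
      B (ρ * i + q.1.val + 1) q.2 y)) z hz]
    refine Finset.sum_congr rfl fun i _ => Finset.sum_congr rfl fun i' _ => ?_
    rw [stack_mul B i i']
  -- Finish
  have h5 : (ρ : ℂ) • ((∑ i ∈ Finset.range κ, z ^ (-(i + 1 : ℤ)) •
          Matrix.of (fun (q : Fin ρ × Fin p) (y : Fin m) =>
            B (ρ * i + q.1.val + 1) q.2 y))ᴴ *
        (∑ i ∈ Finset.range κ, z ^ (-(i + 1 : ℤ)) •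
          Matrix.of (fun (q : Fin ρ × Fin p) (y : Fin m) =>
            B (ρ * i + q.1.val + 1) q.2 y)))
      = (ρ : ℂ) • (1 : Matrix (Fin m) (Fin m) ℂ) := by
    rw [h4, ← h2, h3, Finset.smul_sum]
    refine Finset.sum_congr rfl fun i _ => ?_
    rw [Finset.smul_sum]
    refine Finset.sum_congr rfl fun i' _ => ?_
    rw [smul_smul, Finset.smul_sum]
  have := congrArg (fun M => (ρ : ℂ)⁻¹ • M) h5
  simpa [smul_smul, inv_mul_cancel₀ hρc] using this
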